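/- For symmetric positive definite n×n matrices X and Y, tr(XY) - log det(X) ≥ n + log det(Y), with equality if and only if X = Y⁻¹. -/

import Mathlib

open Matrix Finset
open scoped MatrixOrder

lemma aux_trace_eig {n : ℕ} {M : Matrix (Fin n) (Fin n) ℝ} (hM : M.IsHermitian) :
    M.trace = ∑ i, hM.eigenvalues i := by
  conv_lhs => rw [hM.spectral_theorem]
  rw [Unitary.conjStarAlgAut_apply, trace_mul_cycle, (mem_unitaryGroup_iff'.mp (hM.eigenvectorUnitary).2), one_mul,
    trace_diagonal]
  simp

lemma aux_key {n : ℕ} {M : Matrix (Fin n) (Fin n) ℝ} (hM : M.PosDef) :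
    M.trace - Real.log M.det ≥ (n : ℝ) ∧
    (M.trace - Real.log M.det = (n : ℝ) ↔ M = 1) := by
  have hherm := hM.isHermitian
  set t := hherm.eigenvalues with ht
  have htpos : ∀ i, 0 < t i := fun i => hM.eigenvalues_pos i
  have hdet : M.det = ∏ i, t i := by
    simpa using hherm.det_eq_prod_eigenvalues
  have hlogdet : Real.log M.det = ∑ i, Real.log (t i) := by
    rw [hdet, Real.log_prod (fun i _ => (htpos i).ne')]
  have htr : M.trace = ∑ i, t i := aux_trace_eig hherm
  have hterm : ∀ i, Real.log (t i) ≤ t i - 1 := fun i =>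
    Real.log_le_sub_one_of_pos (htpos i)
  have hsum : M.trace - Real.log M.det - n = ∑ i, (t i - Real.log (t i) - 1) := by
    rw [htr, hlogdet]
    simp [Finset.sum_sub_distrib]
  have hge : M.trace - Real.log M.det ≥ (n : ℝ) := by
    have : (0:ℝ) ≤ ∑ i, (t i - Real.log (t i) - 1) :=
      Finset.sum_nonneg fun i _ => by linarith [hterm i]
    linarith [hsum ▸ this]
  refine ⟨hge, ?_, ?_⟩
  · intro heq
    have hz : ∑ i, (t i - Real.log (t i) - 1) = 0 := by
      rw [← hsum]; linarith
    have hone : ∀ i, t i = 1 := by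
      intro i
      by_contra hne
      have hstrict := Real.log_lt_sub_one_of_pos (htpos i) hne
      have : (0:ℝ) < ∑ i, (t i - Real.log (t i) - 1) := by
        refine Finset.sum_pos' (fun j _ => by linarith [hterm j]) ⟨i, Finset.mem_univ i, by linarith⟩
      linarith
    conv_lhs => rw [hherm.spectral_theorem]
    have hdiag : Matrix.diagonal (RCLike.ofReal ∘ hherm.eigenvalues)
        = (1 : Matrix (Fin n) (Fin n) ℝ) := by
      ext i j
      by_cases h : i = j
      · subst h
        simp only [Matrix.diagonal_apply_eq, Function.comp_apply, Matrix.one_apply_eq]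
        exact_mod_cast hone i
      · simp [Matrix.diagonal_apply_ne _ h, Matrix.one_apply_ne h]
    rw [hdiag, Unitary.conjStarAlgAut_apply, mul_one, mem_unitaryGroup_iff.mp (hherm.eigenvectorUnitary).2]
  · rintro rfl
    simp

theorem logdet_lower_bound (n : ℕ) (X Y : Matrix (Fin n) (Fin n) ℝ)
    (hX : X.PosDef) (hY : Y.PosDef) :
    (X * Y).trace - Real.log X.det ≥ (n : ℝ) + Real.log Y.det ∧
    ((X * Y).trace - Real.log X.det = (n : ℝ) + Real.log Y.det ↔ X = Y⁻¹) := by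
  set S := CFC.sqrt Y with hSdef
  have hSH : S.IsHermitian := (CFC.sqrt_nonneg Y).posSemidef.1
  have hSS : S * S = Y := CFC.sqrt_mul_sqrt_self Y hY.posSemidef.nonneg
  have hdetS : S.det * S.det = Y.det := by rw [← det_mul, hSS]
  have hdetSne : S.det ≠ 0 := by
    intro h
    rw [h, mul_zero] at hdetS
    exact hY.det_pos.ne' hdetS.symm
  have hSunit : IsUnit S.det := hdetSne.isUnit
  have hSinv : S * S⁻¹ = 1 := mul_nonsing_inv S hSunit
  have hSinv' : S⁻¹ * S = 1 := nonsing_inv_mul S hSunit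
  set M := S * X * S with hMdef
  have hM : M.PosDef := by
    apply PosDef.of_dotProduct_mulVec_pos
    · show Mᴴ = M
      rw [hMdef, conjTranspose_mul, conjTranspose_mul, hSH.eq, hX.isHermitian.eq, ← mul_assoc]
    · intro x hx
      have hSx : S *ᵥ x ≠ 0 := by
        intro h
        have h2 : S⁻¹ *ᵥ (S *ᵥ x) = 0 := by rw [h, mulVec_zero]
        rw [mulVec_mulVec, hSinv', one_mulVec] at h2
        exact hx h2
      have hpos := hX.dotProduct_mulVec_pos hSx
      have heq : star x ⬝ᵥ M *ᵥ x = star (S *ᵥ x) ⬝ᵥ X *ᵥ (S *ᵥ x) := by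
        rw [hMdef, ← mulVec_mulVec, ← mulVec_mulVec, star_mulVec, hSH.eq,
          dotProduct_mulVec (star x)]
      rw [heq]
      exact hpos
  have htr : M.trace = (X * Y).trace := by
    rw [hMdef, ← hSS, trace_mul_cycle, trace_mul_comm X (S * S)]
  have hdetM : M.det = X.det * Y.det := by
    rw [hMdef, det_mul, det_mul, ← hdetS]; ring
  have hlogM : Real.log M.det = Real.log X.det + Real.log Y.det := by
    rw [hdetM, Real.log_mul hX.det_pos.ne' hY.det_pos.ne']
  obtain ⟨h1, h2⟩ := aux_key hM
  constructor
  · rw [htr, hlogM] at h1; linarith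
  · constructor
    · intro heq
      have hMn : M.trace - Real.log M.det = (n : ℝ) := by
        rw [htr, hlogM]; linarith
      have h1' : M = 1 := h2.mp hMn
      have hSXS : S * X * S = 1 := by rw [← hMdef]; exact h1'
      have hXeq : X = S⁻¹ * S⁻¹ := by
        calc X = (S⁻¹ * S) * X * (S * S⁻¹) := by rw [hSinv', hSinv, one_mul, mul_one]
        _ = S⁻¹ * (S * X * S) * S⁻¹ := by noncomm_ring
        _ = S⁻¹ * S⁻¹ := by rw [hSXS, mul_one]
      rw [hXeq, ← Matrix.mul_inv_rev, hSS]
    · intro heq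
      subst heq
      rw [nonsing_inv_mul Y hY.det_pos.ne'.isUnit, trace_one, det_nonsing_inv,
        Ring.inverse_eq_inv', Real.log_inv, Fintype.card_fin]
      ring
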